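/- Let A be a Banach algebra, p < 3, and θ > 0. If f: A → A satisfies ‖f(xy) − f(x)f(y)‖ ≤ θ‖y‖^p and ‖f(2x+y) + f(2x−y) − 2f(x+y) − 2f(x−y) − 12f(x)‖ ≤ θ‖y‖^p for all x, y ∈ A, then f is a cubic homomorphism. -/

import Mathlib

/-- `pp x p` is `x ^ p` with the convention `0 ^ p = 0` for all `p` (in particular `p ≤ 0`). -/
noncomputable def pp (x p : ℝ) : ℝ := if x = 0 then 0 else x ^ p

lemma two_rpow_eq (p : ℝ) : (2:ℝ) ^ p = 8 * (2:ℝ) ^ (p - 3) := by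
  have h8 : (2:ℝ) ^ (3:ℝ) = 8 := by
    rw [show (3:ℝ) = ((3:ℕ):ℝ) by norm_num, Real.rpow_natCast]; norm_num
  have h := Real.rpow_add (by norm_num : (0:ℝ) < 2) 3 (p - 3)
  rw [show (3:ℝ) + (p - 3) = p by ring, h8] at h
  exact h

lemma pow_calc (p : ℝ) : ∀ n : ℕ, (((2:ℝ) ^ n : ℝ)) ^ p = (8:ℝ) ^ n * ((2:ℝ) ^ (p - 3)) ^ n := by
  intro n
  induction n with
  | zero => simp
  | succ n ih =>
      rw [pow_succ, Real.mul_rpow (by positivity) (by norm_num), ih, two_rpow_eq p,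
        pow_succ, pow_succ]
      ring

lemma bound_zero (θ p c d : ℝ) (hp : p < 3) (hc : 0 < c) (hd : 0 ≤ d)
    (h : ∀ n : ℕ, (8:ℝ) ^ n * d ≤ θ * pp ((2:ℝ) ^ n * c) p) : d = 0 := by
  set r : ℝ := (2:ℝ) ^ (p - 3) with hr
  have hr0 : 0 ≤ r := Real.rpow_nonneg (by norm_num) _
  have hr1 : r < 1 := Real.rpow_lt_one_of_one_lt_of_neg (by norm_num) (by linarith)
  have hd' : ∀ n : ℕ, d ≤ θ * c ^ p * r ^ n := by
    intro n
    have h8 : (0:ℝ) < (8:ℝ) ^ n := by positivity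
    have hne : (2:ℝ) ^ n * c ≠ 0 := by positivity
    have hn := h n
    rw [pp, if_neg hne, Real.mul_rpow (by positivity) hc.le, pow_calc p n] at hn
    rw [← mul_le_mul_iff_right₀ h8]
    calc (8:ℝ) ^ n * d ≤ θ * ((8:ℝ) ^ n * r ^ n * c ^ p) := hn
      _ = (8:ℝ) ^ n * (θ * c ^ p * r ^ n) := by ring
  have T : Filter.Tendsto (fun n : ℕ => θ * c ^ p * r ^ n) Filter.atTop (nhds 0) := by
    simpa using (tendsto_pow_atTop_nhds_zero_of_lt_one hr0 hr1).const_mul (θ * c ^ p)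
  have hle := ge_of_tendsto' T hd'
  linarith

theorem cubic_superstability_both_powers
    {A : Type*} [NormedRing A] [NormedAlgebra ℝ A] [CompleteSpace A]
    (f : A → A) (θ p : ℝ) (hθ : 0 < θ) (hp : p < 3)
    (h1 : ∀ x y : A, ‖f (x * y) - f x * f y‖ ≤ θ * pp ‖y‖ p)
    (h2 : ∀ x y : A, ‖f ((2:ℝ) • x + y) + f ((2:ℝ) • x - y)
        - (2:ℝ) • f (x + y) - (2:ℝ) • f (x - y) - (12:ℝ) • f x‖ ≤ θ * pp ‖y‖ p) :
    (∀ x y : A, f (x * y) = f x * f y) ∧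
    (∀ x y : A, f ((2:ℝ) • x + y) + f ((2:ℝ) • x - y)
      = (2:ℝ) • f (x + y) + (2:ℝ) • f (x - y) + (12:ℝ) • f x) := by
  have hpp0 : pp ‖(0:A)‖ p = 0 := by simp [pp]
  -- f doubles cubically: f(2x) = 8 f(x)
  have hdb : ∀ x : A, f ((2:ℝ) • x) = (8:ℝ) • f x := by
    intro x
    have h := h2 x 0
    rw [hpp0, mul_zero] at h
    have h0 := norm_le_zero_iff.mp h
    simp only [add_zero, sub_zero] at h0
    have h0' : (2:ℝ) • (f ((2:ℝ) • x) - (8:ℝ) • f x) = 0 := by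
      rw [← h0]; module
    have hn := congrArg norm h0'
    rw [norm_smul, norm_zero, Real.norm_eq_abs] at hn
    have hz : ‖f ((2:ℝ) • x) - (8:ℝ) • f x‖ = 0 :=
      (mul_eq_zero.mp hn).resolve_left (by norm_num)
    exact sub_eq_zero.mp (norm_eq_zero.mp hz)
  have hBn : ∀ (n : ℕ) (x : A), f ((2:ℝ) ^ n • x) = (8:ℝ) ^ n • f x := by
    intro n
    induction n with
    | zero => intro x; simp
    | succ n ih =>
        intro x
        rw [pow_succ, mul_comm, mul_smul, hdb, ih, smul_smul]
        congr 1
        rw [pow_succ]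
        ring
  have hnorm8 : ∀ n : ℕ, ‖((8:ℝ) ^ n : ℝ)‖ = (8:ℝ) ^ n := by
    intro n; rw [Real.norm_eq_abs, abs_of_nonneg (by positivity)]
  have hnorm2 : ∀ (n : ℕ) (y : A), ‖(2:ℝ) ^ n • y‖ = (2:ℝ) ^ n * ‖y‖ := by
    intro n y; rw [norm_smul, Real.norm_eq_abs, abs_of_nonneg (by positivity)]
  constructor
  · intro x y
    by_cases hy : y = 0
    · subst hy
      have h := h1 x 0
      rw [hpp0] at h
      simp only [mul_zero] at h ⊢
      exact sub_eq_zero.mp (norm_le_zero_iff.mp h)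
    · rw [← sub_eq_zero, ← norm_eq_zero]
      apply bound_zero θ p ‖y‖ _ hp (norm_pos_iff.mpr hy) (norm_nonneg _)
      intro n
      have h := h1 x ((2:ℝ) ^ n • y)
      rw [mul_smul_comm, hBn, hBn, mul_smul_comm, ← smul_sub, norm_smul, hnorm8,
        hnorm2] at h
      exact h
  · intro x y
    by_cases hy : y = 0
    · subst hy
      have h := h2 x 0
      rw [hpp0, mul_zero] at h
      have h0 := norm_le_zero_iff.mp h
      simp only [add_zero, sub_zero] at h0 ⊢
      rw [← sub_eq_zero, ← h0]
      module
    · rw [← sub_eq_zero, ← norm_eq_zero]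
      apply bound_zero θ p ‖y‖ _ hp (norm_pos_iff.mpr hy) (norm_nonneg _)
      intro n
      have h := h2 ((2:ℝ) ^ n • x) ((2:ℝ) ^ n • y)
      have eq1 : f ((2:ℝ) • ((2:ℝ) ^ n • x) + (2:ℝ) ^ n • y)
          + f ((2:ℝ) • ((2:ℝ) ^ n • x) - (2:ℝ) ^ n • y)
          - (2:ℝ) • f ((2:ℝ) ^ n • x + (2:ℝ) ^ n • y)
          - (2:ℝ) • f ((2:ℝ) ^ n • x - (2:ℝ) ^ n • y)
          - (12:ℝ) • f ((2:ℝ) ^ n • x)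
          = (8:ℝ) ^ n • (f ((2:ℝ) • x + y) + f ((2:ℝ) • x - y)
            - ((2:ℝ) • f (x + y) + (2:ℝ) • f (x - y) + (12:ℝ) • f x)) := by
        rw [show (2:ℝ) • ((2:ℝ) ^ n • x) + (2:ℝ) ^ n • y = (2:ℝ) ^ n • ((2:ℝ) • x + y) from by module,
          show (2:ℝ) • ((2:ℝ) ^ n • x) - (2:ℝ) ^ n • y = (2:ℝ) ^ n • ((2:ℝ) • x - y) from by module,
          show (2:ℝ) ^ n • x + (2:ℝ) ^ n • y = (2:ℝ) ^ n • (x + y) from by module,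
          show (2:ℝ) ^ n • x - (2:ℝ) ^ n • y = (2:ℝ) ^ n • (x - y) from by module]
        simp only [hBn]
        module
      rw [eq1, norm_smul, hnorm8, hnorm2] at h
      exact h
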